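/- Let n ≥ 1, let 0 < ω < 1 with ω < n, let m > 0, A > 0, x₀, x̄ ∈ ℝⁿ, R₁ > 0, ρ > 2 and R₂ = ρR₁. Let 𝒞(R₁,R₂) = {y ∈ ℝⁿ : R₁ ≤ ‖x̄ − y‖ ≤ R₂}, let ψ : ℝⁿ → ℝ be measurable, and let B₂ ⊆ 𝒞(R₁,R₂) be a measurable set such that |ψ(y)| ≥ m/2 for all y ∈ B₂ and ∫_{B₂} |ψ(y)| ‖y − x₀‖^ω dy ≤ A. If R₁/2 ≤ ‖x̄ − x₀‖ ≤ 2R₂, then there exists a constant C > 0, depending only on n, ω and ρ, such that the Lebesgue measure of B₂ satisfies |B₂| ≤ C (A R₁^{n−ω} / m)^{1/2}. -/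

import Mathlib

open MeasureTheory

set_option maxHeartbeats 1000000

/-- Measure bound for the subset `B₂` of the corona `𝒞(R₁,R₂)`, `R₂ = ρR₁`, on which
`|ψ| ≥ m/2`, in the case `R₁/2 ≤ ‖x̄-x₀‖ ≤ 2R₂`, via Cauchy–Schwarz. -/
theorem corona_set_measure_bound_near
    (n : ℕ) (hn : 1 ≤ n) (ω ρ : ℝ) (hω0 : 0 < ω) (hω1 : ω < 1) (hωn : ω < n)
    (hρ : 2 < ρ) :
    ∃ C : ℝ, 0 < C ∧
      ∀ (m A : ℝ) (x₀ xb : EuclideanSpace ℝ (Fin n)) (R₁ : ℝ)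
        (ψ : EuclideanSpace ℝ (Fin n) → ℝ) (B₂ : Set (EuclideanSpace ℝ (Fin n))),
        0 < m → 0 < A → 0 < R₁ → Measurable ψ → MeasurableSet B₂ →
        B₂ ⊆ {y | R₁ ≤ ‖xb - y‖ ∧ ‖xb - y‖ ≤ ρ * R₁} →
        (∀ y ∈ B₂, m / 2 ≤ |ψ y|) →
        (∫⁻ y in B₂, ENNReal.ofReal (|ψ y| * ‖y - x₀‖ ^ ω)) ≤ ENNReal.ofReal A →
        R₁ / 2 ≤ ‖xb - x₀‖ → ‖xb - x₀‖ ≤ 2 * (ρ * R₁) →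
        volume B₂ ≤ ENNReal.ofReal (C * (A * R₁ ^ ((n : ℝ) - ω) / m) ^ (1 / 2 : ℝ)) := by
  classical
  set E := EuclideanSpace ℝ (Fin n)
  set v : ℝ := (volume (Metric.closedBall (0 : E) 1)).toReal with hv_def
  have hv_fin : volume (Metric.closedBall (0 : E) 1) ≠ ⊤ :=
    (measure_closedBall_lt_top).ne
  have hv_pos : 0 < v :=
    ENNReal.toReal_pos (Metric.measure_closedBall_pos volume 0 one_pos).ne' hv_fin
  have hv_eq : volume (Metric.closedBall (0 : E) 1) = ENNReal.ofReal v :=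
    (ENNReal.ofReal_toReal hv_fin).symm
  have hρ0 : (0:ℝ) < ρ := by linarith
  refine ⟨v * ρ ^ n + v + 2, by positivity, ?_⟩
  intro m A x₀ xb R₁ ψ B₂ hm hA hR₁ hψm hB₂m hB₂sub hψlb hint _ _
  set t : ℝ := A * R₁ ^ ((n : ℝ) - ω) / m with ht_def
  have ht : 0 < t := by
    apply div_pos (mul_pos hA (Real.rpow_pos_of_pos hR₁ _)) hm
  have ht2 : (0:ℝ) < t ^ (1/2 : ℝ) := Real.rpow_pos_of_pos ht _
  have hfr : Module.finrank ℝ E = n := finrank_euclideanSpace_fin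
  have hclosed : ∀ (x : E) (r : ℝ), 0 ≤ r →
      volume (Metric.closedBall x r) = ENNReal.ofReal (r ^ n * v) := by
    intro x r hr
    rw [Measure.addHaar_closedBall' volume x hr, hfr, hv_eq,
      ← ENNReal.ofReal_mul (by positivity)]
  by_cases hcase : R₁ ^ (2 * (n:ℝ)) ≤ t
  · -- trivial bound by the ball of radius ρ R₁
    have hsub : B₂ ⊆ Metric.closedBall xb (ρ * R₁) := by
      intro y hy
      have := (hB₂sub hy).2
      simp only [Metric.mem_closedBall]
      rw [dist_eq_norm, ← norm_neg]
      simpa [neg_sub] using this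
    have hRn : R₁ ^ (n:ℝ) ≤ t ^ (1/2 : ℝ) := by
      have h1 : (R₁ ^ (2 * (n:ℝ))) ^ (1/2 : ℝ) ≤ t ^ (1/2 : ℝ) :=
        Real.rpow_le_rpow (by positivity) hcase (by norm_num)
      have heq : (R₁ ^ (2 * (n:ℝ))) ^ (1/2 : ℝ) = R₁ ^ (n:ℝ) := by
        rw [← Real.rpow_mul hR₁.le]; congr 1; ring
      rwa [heq] at h1
    calc volume B₂ ≤ volume (Metric.closedBall xb (ρ * R₁)) := measure_mono hsub
      _ = ENNReal.ofReal ((ρ * R₁) ^ n * v) := hclosed _ _ (by positivity)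
      _ ≤ ENNReal.ofReal ((v * ρ ^ n + v + 2) * t ^ (1/2 : ℝ)) := by
          apply ENNReal.ofReal_le_ofReal
          have hRn' : R₁ ^ n ≤ t ^ (1/2 : ℝ) := by
            rw [← Real.rpow_natCast R₁ n]; exact hRn
          have heq2 : (ρ * R₁) ^ n * v = v * ρ ^ n * R₁ ^ n := by ring
          rw [heq2]
          have h6 := mul_le_mul_of_nonneg_left hRn'
            (by positivity : (0:ℝ) ≤ v * ρ ^ n)
          nlinarith [ht2]
  · -- main case
    push_neg at hcase
    set r : ℝ := t ^ (1 / (2 * (n:ℝ))) with hr_def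
    have hn0 : (0:ℝ) < n := by exact_mod_cast hn
    have hr : 0 < r := Real.rpow_pos_of_pos ht _
    have hrn : r ^ n = t ^ (1/2 : ℝ) := by
      rw [← Real.rpow_natCast r n, hr_def, ← Real.rpow_mul ht.le]
      congr 1
      field_simp
    set S : Set E := B₂ \ Metric.closedBall x₀ r with hS_def
    have hSmeas : MeasurableSet S := hB₂m.diff measurableSet_closedBall
    have hSlb : ∀ y ∈ S, ENNReal.ofReal (m/2 * r ^ ω) ≤
        ENNReal.ofReal (|ψ y| * ‖y - x₀‖ ^ ω) := by
      intro y hy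
      apply ENNReal.ofReal_le_ofReal
      have h1 : r ≤ ‖y - x₀‖ := by
        have := hy.2
        simp only [Metric.mem_closedBall, dist_eq_norm, not_le] at this
        rw [dist_eq_norm y x₀] at this
        linarith
      have h2 : r ^ ω ≤ ‖y - x₀‖ ^ ω :=
        Real.rpow_le_rpow hr.le h1 hω0.le
      have h3 := hψlb y hy.1
      have h4 : (0:ℝ) < r ^ ω := Real.rpow_pos_of_pos hr _
      nlinarith
    have hSvol : volume S * ENNReal.ofReal (m/2 * r ^ ω) ≤ ENNReal.ofReal A := by
      calc volume S * ENNReal.ofReal (m/2 * r ^ ω)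
          = ∫⁻ _ in S, ENNReal.ofReal (m/2 * r ^ ω) := by
            rw [setLIntegral_const, mul_comm]
        _ ≤ ∫⁻ y in S, ENNReal.ofReal (|ψ y| * ‖y - x₀‖ ^ ω) := by
            apply setLIntegral_mono ((hψm.abs.mul ((measurable_id.sub_const x₀).norm.pow_const ω)).ennreal_ofReal) hSlb
        _ ≤ ∫⁻ y in B₂, ENNReal.ofReal (|ψ y| * ‖y - x₀‖ ^ ω) :=
            lintegral_mono_set Set.diff_subset
        _ ≤ ENNReal.ofReal A := hint
    have hc_pos : (0:ℝ) < m/2 * r ^ ω := by positivity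
    have hSvol' : volume S ≤ ENNReal.ofReal (A / (m/2 * r ^ ω)) := by
      rw [ENNReal.ofReal_div_of_pos hc_pos]
      rw [ENNReal.le_div_iff_mul_le (Or.inl (ENNReal.ofReal_pos.2 hc_pos).ne')
        (Or.inl ENNReal.ofReal_ne_top)]
      exact hSvol
    have hkey : A / (m/2 * r ^ ω) ≤ 2 * t ^ (1/2 : ℝ) := by
      have hrω : r ^ ω = t ^ (ω / (2 * (n:ℝ))) := by
        rw [hr_def, ← Real.rpow_mul ht.le]
        congr 1
        field_simp
      have hexp : t ^ ((((n:ℝ)) - ω) / (2 * (n:ℝ))) ≤ R₁ ^ ((n:ℝ) - ω) := by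
        have h1 : t ^ ((((n:ℝ)) - ω) / (2 * (n:ℝ))) ≤
            (R₁ ^ (2 * (n:ℝ))) ^ ((((n:ℝ)) - ω) / (2 * (n:ℝ))) :=
          Real.rpow_le_rpow ht.le hcase.le
            (le_of_lt (div_pos (by linarith) (by linarith)))
        rwa [← Real.rpow_mul hR₁.le,
          mul_div_cancel₀ _ (ne_of_gt (by linarith) : (2 * (n:ℝ)) ≠ 0)] at h1
      have hR1pos : (0:ℝ) < R₁ ^ ((n:ℝ) - ω) := Real.rpow_pos_of_pos hR₁ _
      have htω : (0:ℝ) < t ^ (ω / (2 * (n:ℝ))) := Real.rpow_pos_of_pos ht _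
      have htd : (0:ℝ) < t ^ ((((n:ℝ)) - ω) / (2 * (n:ℝ))) := Real.rpow_pos_of_pos ht _
      have hsum : t = t ^ (1/2 : ℝ) * t ^ (ω / (2 * (n:ℝ))) *
          t ^ ((((n:ℝ)) - ω) / (2 * (n:ℝ))) := by
        rw [← Real.rpow_add ht, ← Real.rpow_add ht,
          show (1/2 : ℝ) + ω / (2 * (n:ℝ)) + ((n:ℝ) - ω) / (2 * (n:ℝ)) = 1 by
            field_simp; ring,
          Real.rpow_one]
      have h5 : t ≤ t ^ (1/2 : ℝ) * t ^ (ω / (2 * (n:ℝ))) * R₁ ^ ((n:ℝ) - ω) := by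
        conv_lhs => rw [hsum]
        exact mul_le_mul_of_nonneg_left hexp (by positivity)
      have hc' : (0:ℝ) < m/2 * t ^ (ω / (2 * (n:ℝ))) := by positivity
      rw [hrω, div_le_iff₀ hc']
      have hA_eq : A = t * m / R₁ ^ ((n:ℝ) - ω) := by
        rw [ht_def]; field_simp
      rw [hA_eq, div_le_iff₀ hR1pos]
      nlinarith [mul_le_mul_of_nonneg_right h5 hm.le]
    calc volume B₂ ≤ volume (Metric.closedBall x₀ r ∪ S) := by
          apply measure_mono
          intro y hy
          by_cases h : y ∈ Metric.closedBall x₀ r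
          · exact Or.inl h
          · exact Or.inr ⟨hy, h⟩
      _ ≤ volume (Metric.closedBall x₀ r) + volume S := measure_union_le _ _
      _ ≤ ENNReal.ofReal (r ^ n * v) + ENNReal.ofReal (A / (m/2 * r ^ ω)) := by
          rw [hclosed x₀ r hr.le]
          exact add_le_add le_rfl hSvol'
      _ ≤ ENNReal.ofReal ((v * ρ ^ n + v + 2) * t ^ (1/2 : ℝ)) := by
          rw [← ENNReal.ofReal_add (mul_nonneg (pow_nonneg hr.le n) hv_pos.le)
            (div_nonneg hA.le hc_pos.le)]
          apply ENNReal.ofReal_le_ofReal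
          rw [hrn]
          nlinarith [hkey, mul_pos (mul_pos hv_pos (pow_pos hρ0 n)) ht2]
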